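/- Let k ≥ 2 be an integer, a_1, …, a_k real constants, and h_1, …, h_k ∈ C¹([1,∞)) with sup_{t≥1}|h_j(t)| + sup_{t≥1} t|h_j'(t)| ≤ 1 and h_j(t), h_j'(t) → 0 as t → ∞. Set γ_j(t) = (1/(2√2))(j − (k+1)/2) ln(1152 t) + a_j + h_j(t), and for 1 ≤ i ≤ k−1 define ξ_i(t,x) = [6/(e^{√2(γ_{i+1}(t)−γ_i(t))} − 1)] { e^{−√2(x−γ_{i+1}(t))} ln(1 + e^{√2(x−γ_{i+1}(t))}) − e^{−√2(x−γ_i(t))} ln(1 + e^{√2(x−γ_i(t))}) + e^{√2(x−γ_i(t))} ln(1 + e^{−√2(x−γ_i(t))}) − e^{√2(x−γ_{i+1}(t))} ln(1 + e^{−√2(x−γ_{i+1}(t))}) }. Then for every σ ∈ (0, √2) there exist constants C > 0 and T > 1 such that for all t ≥ T and 1 ≤ i ≤ k−1: |ξ_i(t,x)| + |∂_x ξ_i(t,x)| + t|∂_t ξ_i(t,x)| ≤ C t^{−1/2} e^{−σ|x−γ_i(t)|} for x ≤ γ_i(t); ≤ C t^{−1/2} e^{−σ|x−γ_{i+1}(t)|}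 for x ≥ γ_{i+1}(t); and ≤ C t^{−1/2} for γ_i(t) ≤ x ≤ γ_{i+1}(t). -/

import Mathlib

open Real Filter

/-- The Allen–Cahn heteroclinic `ω(x) = tanh (x/√2)`. -/
noncomputable def ω (x : ℝ) : ℝ := Real.tanh (x / Real.sqrt 2)

/-- The explicit first correction function between two interfaces located at `γ₁ < γ₂`. -/
noncomputable def xiCorr (γ₁ γ₂ x : ℝ) : ℝ :=
  (6 / (Real.exp (Real.sqrt 2 * (γ₂ - γ₁)) - 1)) *
    (Real.exp (-(Real.sqrt 2) * (x - γ₂)) * Real.log (1 + Real.exp (Real.sqrt 2 * (x - γ₂)))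
      - Real.exp (-(Real.sqrt 2) * (x - γ₁)) * Real.log (1 + Real.exp (Real.sqrt 2 * (x - γ₁)))
      + Real.exp (Real.sqrt 2 * (x - γ₁)) * Real.log (1 + Real.exp (-(Real.sqrt 2) * (x - γ₁)))
      - Real.exp (Real.sqrt 2 * (x - γ₂)) * Real.log (1 + Real.exp (-(Real.sqrt 2) * (x - γ₂))))

/-- The perturbed interface locations
`γ_j(t) = (1/(2√2))(j − (k+1)/2) ln(1152 t) + a_j + h_j(t)`. -/
noncomputable def gamP (k : ℕ) (a : ℕ → ℝ) (h : ℕ → ℝ → ℝ) (j : ℕ) (t : ℝ) : ℝ :=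
  (1 / (2 * Real.sqrt 2)) * ((j : ℝ) - ((k : ℝ) + 1) / 2) * Real.log (1152 * t) + a j + h j t

/-- The first correction `ξ_i(t,x)` between the `i`-th and `(i+1)`-th interfaces. -/
noncomputable def xiP (k : ℕ) (a : ℕ → ℝ) (h : ℕ → ℝ → ℝ) (i : ℕ) (t x : ℝ) : ℝ :=
  xiCorr (gamP k a h i t) (gamP k a h (i + 1) t) x


noncomputable def fA (u : ℝ) : ℝ :=
  Real.exp (-(Real.sqrt 2) * u) * Real.log (1 + Real.exp (Real.sqrt 2 * u))

noncomputable def fA' (u : ℝ) : ℝ :=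
  Real.sqrt 2 / (1 + Real.exp (Real.sqrt 2 * u)) - Real.sqrt 2 * fA u

lemma s2_pos : 0 < Real.sqrt 2 := Real.sqrt_pos.2 (by norm_num)
lemma s2_sq : Real.sqrt 2 ^ 2 = 2 := Real.sq_sqrt (by norm_num)
lemma s2_le_two : Real.sqrt 2 ≤ 2 := by nlinarith [s2_pos, s2_sq]
lemma one_le_s2 : 1 ≤ Real.sqrt 2 := by nlinarith [s2_pos, s2_sq]

lemma oae_pos (y : ℝ) : 0 < 1 + Real.exp y := by positivity

lemma exp_mul_exp_neg (y : ℝ) : Real.exp (-y) * Real.exp y = 1 := by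
  rw [← Real.exp_add]; simp

lemma fA_nonneg (u : ℝ) : 0 ≤ fA u :=
  mul_nonneg (Real.exp_pos _).le (Real.log_nonneg (by linarith [Real.exp_pos (Real.sqrt 2 * u)]))

lemma log_one_add_le (y : ℝ) (hy : 0 ≤ y) : Real.log (1 + y) ≤ y := by
  have := Real.log_le_sub_one_of_pos (x := 1 + y) (by linarith)
  linarith

lemma fA_le_one (u : ℝ) : fA u ≤ 1 := by
  have h1 : Real.log (1 + Real.exp (Real.sqrt 2 * u)) ≤ Real.exp (Real.sqrt 2 * u) :=
    log_one_add_le _ (Real.exp_pos _).le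
  calc fA u ≤ Real.exp (-(Real.sqrt 2) * u) * Real.exp (Real.sqrt 2 * u) := by
        apply mul_le_mul_of_nonneg_left h1 (Real.exp_pos _).le
    _ = 1 := by rw [show -(Real.sqrt 2) * u = -(Real.sqrt 2 * u) by ring]; exact exp_mul_exp_neg _

-- log(1+v) ≥ v/(1+v) for v ≥ 0
lemma log_one_add_ge (v : ℝ) (hv : 0 ≤ v) : v / (1 + v) ≤ Real.log (1 + v) := by
  have h := Real.log_le_sub_one_of_pos (x := (1 + v)⁻¹) (by positivity)
  rw [Real.log_inv] at h
  have h1 : (0:ℝ) < 1 + v := by linarith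
  have : (1 + v)⁻¹ - 1 = -(v / (1+v)) := by field_simp; ring
  rw [this] at h; linarith

lemma inv_le_fA (u : ℝ) : (1 + Real.exp (Real.sqrt 2 * u))⁻¹ ≤ fA u := by
  set v := Real.exp (Real.sqrt 2 * u) with hv
  have hvp : 0 < v := Real.exp_pos _
  have h := log_one_add_ge v hvp.le
  have he : Real.exp (-(Real.sqrt 2) * u) = v⁻¹ := by
    rw [show -(Real.sqrt 2) * u = -(Real.sqrt 2 * u) by ring, Real.exp_neg]
  have : (1+v)⁻¹ = v⁻¹ * (v / (1+v)) := by field_simp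
  rw [fA, he, ← hv, this]
  exact mul_le_mul_of_nonneg_left h (by positivity)

lemma fA_lower (u : ℝ) : 1 - Real.exp (Real.sqrt 2 * u) ≤ fA u := by
  have h := inv_le_fA u
  have hvp : 0 < Real.exp (Real.sqrt 2 * u) := Real.exp_pos _
  have hinv : (1 + Real.exp (Real.sqrt 2 * u))⁻¹ * (1 + Real.exp (Real.sqrt 2 * u)) = 1 :=
    inv_mul_cancel₀ (by positivity)
  nlinarith [sq_nonneg (Real.exp (Real.sqrt 2 * u))]

lemma fA_decay (u : ℝ) (hu : 0 ≤ u) :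
    fA u ≤ (2 + Real.sqrt 2 * u) * Real.exp (-(Real.sqrt 2) * u) := by
  set w := Real.sqrt 2 * u with hw
  have hw0 : 0 ≤ w := by positivity
  have key : Real.log (1 + Real.exp w) ≤ w + 1 := by
    have e1 : (1:ℝ) + Real.exp w = Real.exp w * (1 + Real.exp (-w)) := by
      rw [mul_add, mul_one, mul_comm (Real.exp w), exp_mul_exp_neg w]
      ring
    rw [e1, Real.log_mul (Real.exp_ne_zero _) (by positivity), Real.log_exp]
    have := log_one_add_le (Real.exp (-w)) (Real.exp_pos _).le
    have h2 : Real.exp (-w) ≤ 1 := Real.exp_le_one_iff.2 (by linarith)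
    linarith
  have : fA u ≤ Real.exp (-(Real.sqrt 2)*u) * (w + 1) := by
    rw [fA, ← hw]
    exact mul_le_mul_of_nonneg_left key (Real.exp_pos _).le
  nlinarith [Real.exp_pos (-(Real.sqrt 2)*u)]

lemma hasDerivAt_fA (u : ℝ) : HasDerivAt fA (fA' u) u := by
  have h1 : HasDerivAt (fun y : ℝ => Real.exp (-(Real.sqrt 2) * y))
      (Real.exp (-(Real.sqrt 2) * u) * (-(Real.sqrt 2))) u := by
    simpa using ((hasDerivAt_id u).const_mul (-(Real.sqrt 2))).exp
  have h2 : HasDerivAt (fun y : ℝ => 1 + Real.exp (Real.sqrt 2 * y))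
      (Real.exp (Real.sqrt 2 * u) * Real.sqrt 2) u := by
    simpa using (((hasDerivAt_id u).const_mul (Real.sqrt 2)).exp).const_add 1
  have h3 : HasDerivAt (fun y : ℝ => Real.log (1 + Real.exp (Real.sqrt 2 * y)))
      ((Real.exp (Real.sqrt 2 * u) * Real.sqrt 2) / (1 + Real.exp (Real.sqrt 2 * u))) u :=
    h2.log (by positivity)
  have h4 := h1.mul h3
  have heq : Real.exp (-(Real.sqrt 2) * u) * (-(Real.sqrt 2)) *
        Real.log (1 + Real.exp (Real.sqrt 2 * u)) +
      Real.exp (-(Real.sqrt 2) * u) *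
        ((Real.exp (Real.sqrt 2 * u) * Real.sqrt 2) / (1 + Real.exp (Real.sqrt 2 * u)))
      = fA' u := by
    have e1 : Real.exp (-(Real.sqrt 2) * u) * Real.exp (Real.sqrt 2 * u) = 1 := by
      rw [show -(Real.sqrt 2) * u = -(Real.sqrt 2 * u) by ring]; exact exp_mul_exp_neg _
    have e2 : Real.exp (-(Real.sqrt 2) * u) *
        ((Real.exp (Real.sqrt 2 * u) * Real.sqrt 2) / (1 + Real.exp (Real.sqrt 2 * u)))
        = Real.sqrt 2 / (1 + Real.exp (Real.sqrt 2 * u)) := by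
      rw [mul_div_assoc', ← mul_assoc, e1, one_mul]
    rw [e2, fA', fA]; ring
  rw [heq] at h4
  exact h4

lemma fA'_nonpos (u : ℝ) : fA' u ≤ 0 := by
  have h := inv_le_fA u
  have : Real.sqrt 2 / (1 + Real.exp (Real.sqrt 2 * u)) ≤ Real.sqrt 2 * fA u := by
    rw [div_eq_mul_inv]
    exact mul_le_mul_of_nonneg_left h s2_pos.le
  rw [fA']; linarith

lemma fA'_abs (u : ℝ) : |fA' u| ≤ Real.sqrt 2 := by
  rw [abs_of_nonpos (fA'_nonpos u)]
  have h1 : 0 ≤ Real.sqrt 2 / (1 + Real.exp (Real.sqrt 2 * u)) := by positivity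
  have h2 : fA u ≤ 1 := fA_le_one u
  rw [fA']
  nlinarith [s2_pos]

lemma fA'_neg (u : ℝ) (hu : u ≤ 0) : |fA' u| ≤ Real.sqrt 2 * Real.exp (Real.sqrt 2 * u) := by
  rw [abs_of_nonpos (fA'_nonpos u)]
  rw [fA']
  set v := Real.exp (Real.sqrt 2 * u) with hv
  have hvp : 0 < v := Real.exp_pos _
  have h2 : fA u ≤ 1 := fA_le_one u
  -- √2 * fA u - √2/(1+v) ≤ √2 - √2/(1+v) = √2 v/(1+v) ≤ √2 v
  have hinv : Real.sqrt 2 / (1 + v) * (1 + v) = Real.sqrt 2 := by field_simp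
  have hqn : 0 ≤ Real.sqrt 2 / (1 + v) := by positivity
  have h5 : Real.sqrt 2 * (1 - v) * (1 + v) ≤ Real.sqrt 2 := by
    nlinarith [s2_pos, sq_nonneg v, hvp]
  have h4 : Real.sqrt 2 * (1 - v) ≤ Real.sqrt 2 / (1 + v) := by
    rw [le_div_iff₀ (by positivity)]; linarith
  have h3 : Real.sqrt 2 - Real.sqrt 2 / (1 + v) ≤ Real.sqrt 2 * v := by nlinarith
  nlinarith [s2_pos]

lemma fA'_pos (u : ℝ) (hu : 0 ≤ u) :
    |fA' u| ≤ 2 * ((2 + Real.sqrt 2 * u) * Real.exp (-(Real.sqrt 2) * u)) := by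
  rw [abs_of_nonpos (fA'_nonpos u), fA']
  have h1 : 0 ≤ Real.sqrt 2 / (1 + Real.exp (Real.sqrt 2 * u)) := by positivity
  have h2 := fA_decay u hu
  have h3 := fA_nonneg u
  nlinarith [s2_pos, s2_le_two, Real.exp_pos (-(Real.sqrt 2) * u)]

noncomputable def Csig (σ : ℝ) : ℝ := 2 + Real.sqrt 2 / (Real.sqrt 2 - σ)

lemma Csig_pos (σ : ℝ) (h2 : σ < Real.sqrt 2) : 0 < Csig σ := by
  have : 0 < Real.sqrt 2 - σ := by linarith
  have : 0 ≤ Real.sqrt 2 / (Real.sqrt 2 - σ) := by positivity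
  rw [Csig]; linarith

lemma poly_decay (σ : ℝ) (h0 : 0 < σ) (h2 : σ < Real.sqrt 2) (u : ℝ) (hu : 0 ≤ u) :
    (2 + Real.sqrt 2 * u) * Real.exp (-(Real.sqrt 2) * u) ≤ Csig σ * Real.exp (-σ * u) := by
  set δ := Real.sqrt 2 - σ with hδ
  have hδ0 : 0 < δ := by rw [hδ]; linarith
  have e1 : δ * u ≤ Real.exp (δ * u) := by
    have := Real.add_one_le_exp (δ * u); linarith
  have key : 2 + Real.sqrt 2 * u ≤ Csig σ * Real.exp (δ * u) := by
    have h1 : (1:ℝ) ≤ Real.exp (δ * u) := Real.one_le_exp (by positivity)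
    have h3 : Real.sqrt 2 * u = (Real.sqrt 2 / δ) * (δ * u) := by
      field_simp
    have h4 : (Real.sqrt 2 / δ) * (δ * u) ≤ (Real.sqrt 2 / δ) * Real.exp (δ * u) :=
      mul_le_mul_of_nonneg_left e1 (by positivity)
    rw [Csig]
    nlinarith
  have e2 : Real.exp (δ * u) * Real.exp (-(Real.sqrt 2) * u) = Real.exp (-σ * u) := by
    rw [← Real.exp_add]; congr 1; rw [hδ]; ring
  calc (2 + Real.sqrt 2 * u) * Real.exp (-(Real.sqrt 2) * u)
      ≤ Csig σ * Real.exp (δ * u) * Real.exp (-(Real.sqrt 2) * u) :=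
        mul_le_mul_of_nonneg_right key (Real.exp_pos _).le
    _ = Csig σ * Real.exp (-σ * u) := by rw [mul_assoc, e2]

lemma fA_sig (σ : ℝ) (h0 : 0 < σ) (h2 : σ < Real.sqrt 2) (u : ℝ) (hu : 0 ≤ u) :
    fA u ≤ Csig σ * Real.exp (-σ * u) :=
  (fA_decay u hu).trans (poly_decay σ h0 h2 u hu)

lemma fA'_sig (σ : ℝ) (h0 : 0 < σ) (h2 : σ < Real.sqrt 2) (u : ℝ) (hu : 0 ≤ u) :
    |fA' u| ≤ 2 * (Csig σ * Real.exp (-σ * u)) :=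
  (fA'_pos u hu).trans (by nlinarith [poly_decay σ h0 h2 u hu])

lemma exp_neg_mono (σ b c : ℝ) (h0 : 0 ≤ σ) (hbc : b ≤ c) :
    Real.exp (-σ * c) ≤ Real.exp (-σ * b) := by
  apply Real.exp_le_exp.2; nlinarith

lemma fA_neg_sig (σ b : ℝ) (h2 : σ ≤ Real.sqrt 2) (hb : 0 ≤ b) :
    Real.exp (Real.sqrt 2 * (-b)) ≤ Real.exp (-σ * b) := by
  apply Real.exp_le_exp.2; nlinarith

/-- Core region bound: for `0 ≤ b ≤ c`. -/
lemma region_bound (σ : ℝ) (h0 : 0 < σ) (h2 : σ < Real.sqrt 2) (b c : ℝ)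
    (hb : 0 ≤ b) (hbc : b ≤ c) :
    |fA (-c) - fA (-b)| + fA b + fA c +
      (|fA' (-b)| + |fA' (-c)| + |fA' b| + |fA' c|)
      ≤ (6 + 6 * Csig σ) * Real.exp (-σ * b) := by
  have hc : 0 ≤ c := hb.trans hbc
  have hCp := Csig_pos σ h2
  have hEb : Real.exp (Real.sqrt 2 * (-b)) ≤ Real.exp (-σ * b) := fA_neg_sig σ b h2.le hb
  have hEc : Real.exp (Real.sqrt 2 * (-c)) ≤ Real.exp (-σ * c) := fA_neg_sig σ c h2.le hc
  have hmono : Real.exp (-σ * c) ≤ Real.exp (-σ * b) := exp_neg_mono σ b c h0.le hbc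
  -- difference term
  have d1 : |fA (-c) - fA (-b)| ≤ 2 * Real.exp (-σ * b) := by
    have l1 := fA_lower (-b)
    have l2 := fA_lower (-c)
    have u1 := fA_le_one (-b)
    have u2 := fA_le_one (-c)
    rw [abs_le]; constructor <;> nlinarith [Real.exp_pos (Real.sqrt 2 * (-b)),
      Real.exp_pos (Real.sqrt 2 * (-c))]
  have d2 : fA b ≤ Csig σ * Real.exp (-σ * b) := fA_sig σ h0 h2 b hb
  have d3 : fA c ≤ Csig σ * Real.exp (-σ * b) :=
    (fA_sig σ h0 h2 c hc).trans (by nlinarith)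
  have d4 : |fA' (-b)| ≤ 2 * Real.exp (-σ * b) := by
    have := fA'_neg (-b) (by linarith)
    nlinarith [s2_le_two, Real.exp_pos (Real.sqrt 2 * (-b)), abs_nonneg (fA' (-b))]
  have d5 : |fA' (-c)| ≤ 2 * Real.exp (-σ * b) := by
    have := fA'_neg (-c) (by linarith)
    nlinarith [s2_le_two, Real.exp_pos (Real.sqrt 2 * (-c)), abs_nonneg (fA' (-c))]
  have d6 : |fA' b| ≤ 2 * (Csig σ * Real.exp (-σ * b)) := fA'_sig σ h0 h2 b hb
  have d7 : |fA' c| ≤ 2 * (Csig σ * Real.exp (-σ * b)) :=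
    (fA'_sig σ h0 h2 c hc).trans (by nlinarith)
  nlinarith [Real.exp_pos (-σ * b)]


noncomputable def Gfun (γ₁ γ₂ x : ℝ) : ℝ :=
  fA (x - γ₂) - fA (x - γ₁) + fA (γ₁ - x) - fA (γ₂ - x)

lemma xiCorr_eq (γ₁ γ₂ x : ℝ) :
    xiCorr γ₁ γ₂ x = 6 / (Real.exp (Real.sqrt 2 * (γ₂ - γ₁)) - 1) * Gfun γ₁ γ₂ x := by
  have e1 : ∀ u : ℝ, fA (-u) = Real.exp (Real.sqrt 2 * u) * Real.log (1 + Real.exp (-(Real.sqrt 2) * u)) := by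
    intro u
    rw [fA, show -(Real.sqrt 2) * (-u) = Real.sqrt 2 * u by ring,
      show Real.sqrt 2 * (-u) = -(Real.sqrt 2) * u by ring]
  rw [xiCorr, Gfun, show γ₁ - x = -(x - γ₁) by ring, show γ₂ - x = -(x - γ₂) by ring,
    e1 (x - γ₁), e1 (x - γ₂), fA, fA]

lemma hasDerivAt_fA_sub (c x : ℝ) : HasDerivAt (fun y : ℝ => fA (y - c)) (fA' (x - c)) x := by
  have := (hasDerivAt_fA (x - c)).comp x ((hasDerivAt_id x).sub_const c)
  simpa [Function.comp_def] using this

lemma hasDerivAt_fA_const_sub (c x : ℝ) :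
    HasDerivAt (fun y : ℝ => fA (c - y)) (-(fA' (c - x))) x := by
  have := (hasDerivAt_fA (c - x)).comp x ((hasDerivAt_id x).const_sub c)
  simpa [Function.comp_def] using this

lemma hasDerivAt_Gfun_x (γ₁ γ₂ x : ℝ) :
    HasDerivAt (fun y => Gfun γ₁ γ₂ y)
      (fA' (x - γ₂) - fA' (x - γ₁) + -(fA' (γ₁ - x)) - -(fA' (γ₂ - x))) x := by
  have := (((hasDerivAt_fA_sub γ₂ x).sub (hasDerivAt_fA_sub γ₁ x)).add
    (hasDerivAt_fA_const_sub γ₁ x)).sub (hasDerivAt_fA_const_sub γ₂ x)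
  simpa [Gfun, Pi.sub_def, Pi.add_def] using this


lemma hasDerivAt_xi_t (γ₁ γ₂ : ℝ → ℝ) (g1' g2' x t : ℝ)
    (h1 : HasDerivAt γ₁ g1' t) (h2 : HasDerivAt γ₂ g2' t)
    (hne : Real.exp (Real.sqrt 2 * (γ₂ t - γ₁ t)) - 1 ≠ 0) :
    HasDerivAt (fun s => xiCorr (γ₁ s) (γ₂ s) x)
      (-(6 * (Real.sqrt 2 * (g2' - g1')) * Real.exp (Real.sqrt 2 * (γ₂ t - γ₁ t)))
          / (Real.exp (Real.sqrt 2 * (γ₂ t - γ₁ t)) - 1) ^ 2 * Gfun (γ₁ t) (γ₂ t) x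
        + 6 / (Real.exp (Real.sqrt 2 * (γ₂ t - γ₁ t)) - 1) *
          (fA' (x - γ₂ t) * (-g2') - fA' (x - γ₁ t) * (-g1')
            + fA' (γ₁ t - x) * g1' - fA' (γ₂ t - x) * g2')) t := by
  have hd : HasDerivAt (fun s => Real.sqrt 2 * (γ₂ s - γ₁ s)) (Real.sqrt 2 * (g2' - g1')) t :=
    (h2.sub h1).const_mul (Real.sqrt 2)
  have hE : HasDerivAt (fun s => Real.exp (Real.sqrt 2 * (γ₂ s - γ₁ s)) - 1)
      (Real.exp (Real.sqrt 2 * (γ₂ t - γ₁ t)) * (Real.sqrt 2 * (g2' - g1'))) t :=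
    hd.exp.sub_const 1
  have hA := (hasDerivAt_const t (6:ℝ)).div hE hne
  have m1 : HasDerivAt (fun s => fA (x - γ₂ s)) (fA' (x - γ₂ t) * (-g2')) t :=
    by have := (hasDerivAt_fA (x - γ₂ t)).comp t (h2.const_sub x); exact this
  have m2 : HasDerivAt (fun s => fA (x - γ₁ s)) (fA' (x - γ₁ t) * (-g1')) t :=
    by have := (hasDerivAt_fA (x - γ₁ t)).comp t (h1.const_sub x); exact this
  have m3 : HasDerivAt (fun s => fA (γ₁ s - x)) (fA' (γ₁ t - x) * g1') t :=
    by have := (hasDerivAt_fA (γ₁ t - x)).comp t (h1.sub_const x); exact this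
  have m4 : HasDerivAt (fun s => fA (γ₂ s - x)) (fA' (γ₂ t - x) * g2') t :=
    by have := (hasDerivAt_fA (γ₂ t - x)).comp t (h2.sub_const x); exact this
  have hG : HasDerivAt (fun s => Gfun (γ₁ s) (γ₂ s) x)
      (fA' (x - γ₂ t) * (-g2') - fA' (x - γ₁ t) * (-g1')
        + fA' (γ₁ t - x) * g1' - fA' (γ₂ t - x) * g2') t := by
    simpa [Gfun, Pi.sub_def, Pi.add_def] using ((m1.sub m2).add m3).sub m4
  have hF := hA.mul hG
  have hfun : (fun s => xiCorr (γ₁ s) (γ₂ s) x)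
      = fun s => 6 / (Real.exp (Real.sqrt 2 * (γ₂ s - γ₁ s)) - 1) * Gfun (γ₁ s) (γ₂ s) x :=
    funext fun s => xiCorr_eq (γ₁ s) (γ₂ s) x
  rw [hfun]
  exact hF.congr_deriv (by simp only [Pi.div_apply]; ring)

lemma abs4 (a b c d : ℝ) : |a - b + c - d| ≤ |a| + |b| + |c| + |d| := by
  rw [abs_le]
  constructor <;>
    [nlinarith [neg_abs_le a, le_abs_self a, neg_abs_le b, le_abs_self b,
      neg_abs_le c, le_abs_self c, neg_abs_le d, le_abs_self d];
     nlinarith [neg_abs_le a, le_abs_self a, neg_abs_le b, le_abs_self b,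
      neg_abs_le c, le_abs_self c, neg_abs_le d, le_abs_self d]]

lemma rpow_neg_half (t : ℝ) (ht : 0 < t) : t ^ (-(1:ℝ)/2) = (Real.sqrt t)⁻¹ := by
  rw [show (-(1:ℝ)/2) = -(1/2 : ℝ) by ring, Real.rpow_neg ht.le, Real.sqrt_eq_rpow]

lemma div_bound_A (E : ℝ) (hE : 2 ≤ E) : 6 / (E - 1) ≤ 12 / E := by
  rw [div_le_div_iff₀ (by linarith) (by linarith)]; nlinarith

lemma div_bound_B (E : ℝ) (hE : 2 ≤ E) : E / (E - 1) ^ 2 ≤ 4 / E := by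
  rw [div_le_div_iff₀ (by nlinarith) (by linarith)]; nlinarith

lemma hasDerivAt_log1152 (t : ℝ) (ht : 0 < t) :
    HasDerivAt (fun s : ℝ => Real.log (1152 * s)) t⁻¹ t := by
  have h1 : HasDerivAt (fun s : ℝ => (1152 : ℝ) * s) 1152 t := by
    simpa using (hasDerivAt_id t).const_mul (1152 : ℝ)
  have := (Real.hasDerivAt_log (by positivity : (1152:ℝ) * t ≠ 0)).comp t h1
  exact this.congr_deriv (by field_simp)



lemma hasDerivAt_gamP (k : ℕ) (a : ℕ → ℝ) (h : ℕ → ℝ → ℝ) (j : ℕ) (t : ℝ) (ht : 0 < t)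
    (hdiff : DifferentiableAt ℝ (h j) t) :
    HasDerivAt (fun s => gamP k a h j s)
      (1 / (2 * Real.sqrt 2) * ((j : ℝ) - ((k : ℝ) + 1) / 2) * t⁻¹ + deriv (h j) t) t := by
  have hl := (hasDerivAt_log1152 t ht).const_mul
    (1 / (2 * Real.sqrt 2) * ((j : ℝ) - ((k : ℝ) + 1) / 2))
  exact (hl.add_const (a j)).add hdiff.hasDerivAt

lemma key_comb (kk Ei PP QQ : ℝ) (hk : 2 ≤ kk) (hE : 0 ≤ Ei) (hP : 0 ≤ PP) (hQ : 0 ≤ QQ) :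
    12*Ei*QQ + 12*Ei*PP + (96*(kk+1)*Ei*QQ + 12*(kk+1)*Ei*PP) ≤ 108*(kk+1)*Ei*(PP+QQ) := by
  nlinarith [mul_nonneg (mul_nonneg hE hQ) (by linarith : (0:ℝ) ≤ kk),
    mul_nonneg (mul_nonneg hE hP) (by linarith : (0:ℝ) ≤ kk),
    mul_nonneg hE hP, mul_nonneg hE hQ]

open Filter

set_option maxHeartbeats 12000000 in
/-- Decay estimates for the first correction functions `ξ_i` (Lemma on `ξ_i`). -/
theorem xiP_estimates (k : ℕ) (hk : 2 ≤ k) (a : ℕ → ℝ) (h : ℕ → ℝ → ℝ)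
    (hreg : ∀ j, 1 ≤ j → j ≤ k → ContDiffOn ℝ 1 (h j) (Set.Ici (1 : ℝ)))
    (hbd : ∀ j, 1 ≤ j → j ≤ k →
      ∀ t : ℝ, 1 ≤ t → ∀ s : ℝ, 1 ≤ s → |h j t| + s * |deriv (h j) s| ≤ 1)
    (hlim : ∀ j, 1 ≤ j → j ≤ k →
      Tendsto (h j) atTop (nhds 0) ∧ Tendsto (deriv (h j)) atTop (nhds 0))
    (σ : ℝ) (hσ0 : 0 < σ) (hσ2 : σ < Real.sqrt 2) :
    ∃ C : ℝ, 0 < C ∧ ∃ T : ℝ, 1 < T ∧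
      ∀ t : ℝ, T ≤ t → ∀ i, 1 ≤ i → i ≤ k - 1 → ∀ x : ℝ,
        (x ≤ gamP k a h i t →
          |xiP k a h i t x| + |deriv (fun y => xiP k a h i t y) x|
              + t * |deriv (fun s => xiP k a h i s x) t|
            ≤ C * t ^ (-(1 : ℝ) / 2) * Real.exp (-σ * |x - gamP k a h i t|)) ∧
        (gamP k a h (i + 1) t ≤ x →
          |xiP k a h i t x| + |deriv (fun y => xiP k a h i t y) x|
              + t * |deriv (fun s => xiP k a h i s x) t|
            ≤ C * t ^ (-(1 : ℝ) / 2) * Real.exp (-σ * |x - gamP k a h (i + 1) t|)) ∧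
        (gamP k a h i t ≤ x → x ≤ gamP k a h (i + 1) t →
          |xiP k a h i t x| + |deriv (fun y => xiP k a h i t y) x|
              + t * |deriv (fun s => xiP k a h i s x) t|
            ≤ C * t ^ (-(1 : ℝ) / 2)) := by
  clear hlim
  have hCs := Csig_pos σ hσ2
  set Ma : ℝ := ∑ j ∈ Finset.range (k+1), |a j| with hMadef
  have hMa0 : 0 ≤ Ma := Finset.sum_nonneg fun _ _ => abs_nonneg _
  have hMaj : ∀ j, j ≤ k → |a j| ≤ Ma := fun j hj =>
    Finset.single_le_sum (f := fun j => |a j|) (fun _ _ => abs_nonneg _)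
      (Finset.mem_range.2 (by omega))
  set K : ℝ := Real.exp (Real.sqrt 2 * (2*Ma + 2)) with hKdef
  have hK1 : 1 ≤ K := Real.one_le_exp (by positivity)
  have hk2 : (2:ℝ) ≤ (k:ℝ) := by exact_mod_cast hk
  set C : ℝ := 108 * ((k:ℝ)+1) * K * (22 + 6 * Csig σ) with hCdef
  have hC0 : 0 < C := by
    apply mul_pos (mul_pos (by positivity) (by linarith)) (by linarith)
  refine ⟨C, hC0, K^2 + 2, by nlinarith [sq_nonneg K], ?_⟩
  intro t ht i hi1 hik x
  have ht1 : (1:ℝ) < t := by nlinarith [sq_nonneg K]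
  have ht0 : (0:ℝ) < t := by linarith
  have h1le : (1:ℝ) ≤ t := ht1.le
  have hsqt : 0 < Real.sqrt t := Real.sqrt_pos.2 ht0
  have hKt : K ≤ Real.sqrt t := by
    calc K = Real.sqrt (K^2) := (Real.sqrt_sq (by linarith)).symm
    _ ≤ Real.sqrt t := Real.sqrt_le_sqrt (by nlinarith)
  have hik1 : i + 1 ≤ k := by omega
  have hik0 : i ≤ k := by omega
  have hbi := hbd i hi1 hik0 t h1le t h1le
  have hbi1 := hbd (i+1) (by omega) hik1 t h1le t h1le
  have habs_hi : |h i t| ≤ 1 := by nlinarith [mul_nonneg ht0.le (abs_nonneg (deriv (h i) t))]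
  have habs_hi1 : |h (i+1) t| ≤ 1 := by
    nlinarith [mul_nonneg ht0.le (abs_nonneg (deriv (h (i+1)) t))]
  have hder_hi : t * |deriv (h i) t| ≤ 1 := by nlinarith [abs_nonneg (h i t)]
  have hder_hi1 : t * |deriv (h (i+1)) t| ≤ 1 := by nlinarith [abs_nonneg (h (i+1) t)]
  set g1 := gamP k a h i t with hg1def
  set g2 := gamP k a h (i+1) t with hg2def
  set E := Real.exp (Real.sqrt 2 * (g2 - g1)) with hEdef
  have hs2ne : Real.sqrt 2 ≠ 0 := ne_of_gt s2_pos
  -- value of the exponent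
  have hDval : Real.sqrt 2 * (g2 - g1)
      = Real.log (1152*t) / 2
        + Real.sqrt 2 * ((a (i+1) - a i) + (h (i+1) t - h i t)) := by
    rw [hg1def, hg2def, gamP, gamP]
    push_cast
    field_simp
    ring
  have hDelta : -(2*Ma + 2) ≤ (a (i+1) - a i) + (h (i+1) t - h i t) := by
    have h1 := hMaj i hik0
    have h2 := hMaj (i+1) hik1
    have := neg_abs_le (a (i+1)); have := le_abs_self (a i)
    have := neg_abs_le (h (i+1) t); have := le_abs_self (h i t)
    linarith
  have hsq1152pos : 0 < Real.sqrt (1152*t) := Real.sqrt_pos.2 (by positivity)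
  have hElb : Real.sqrt (1152*t) / K ≤ E := by
    have heq : Real.sqrt (1152*t)/K
        = Real.exp (Real.log (1152*t)/2 - Real.sqrt 2 * (2*Ma+2)) := by
      rw [Real.exp_sub, ← Real.log_sqrt (by positivity : (0:ℝ) ≤ 1152*t),
        Real.exp_log hsq1152pos, hKdef]
    rw [hEdef, hDval, heq]
    apply Real.exp_le_exp.2
    nlinarith [mul_le_mul_of_nonneg_left hDelta s2_pos.le]
  have h33 : 33 * Real.sqrt t ≤ Real.sqrt (1152 * t) := by
    rw [Real.sqrt_mul (by norm_num : (0:ℝ) ≤ 1152) t]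
    have h1089 : Real.sqrt 1089 = 33 := by
      rw [show (1089:ℝ) = 33^2 by norm_num, Real.sqrt_sq (by norm_num)]
    have : (33:ℝ) ≤ Real.sqrt 1152 := by
      have := Real.sqrt_le_sqrt (by norm_num : (1089:ℝ) ≤ 1152)
      linarith
    nlinarith [Real.sqrt_nonneg t]
  have hE33 : 33 ≤ E := by
    have hKpos : (0:ℝ) < K := by linarith
    have step : 33 * Real.sqrt t / K ≤ Real.sqrt (1152*t) / K := by gcongr
    have step2 : (33:ℝ) ≤ 33 * Real.sqrt t / K := by
      rw [le_div_iff₀ hKpos]; nlinarith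
    linarith
  have hE2 : (2:ℝ) ≤ E := by linarith
  have hEm1 : 0 < E - 1 := by linarith
  have hne : E - 1 ≠ 0 := ne_of_gt hEm1
  have hEpos : (0:ℝ) < E := by linarith
  have hg12 : g1 ≤ g2 := by
    by_contra hcon
    push_neg at hcon
    have h1 : Real.sqrt 2 * (g2 - g1) ≤ 0 := by nlinarith [s2_pos]
    have h2 : E ≤ 1 := by rw [hEdef]; exact Real.exp_le_one_iff.2 h1
    linarith
  -- differentiability of h at t
  have hdiff1 : DifferentiableAt ℝ (h i) t :=
    ((hreg i hi1 hik0).contDiffAt (Ici_mem_nhds ht1)).differentiableAt one_ne_zero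
  have hdiff2 : DifferentiableAt ℝ (h (i+1)) t :=
    ((hreg (i+1) (by omega) hik1).contDiffAt (Ici_mem_nhds ht1)).differentiableAt one_ne_zero
  set d1 : ℝ := 1 / (2 * Real.sqrt 2) * ((i : ℝ) - ((k : ℝ) + 1) / 2) * t⁻¹ + deriv (h i) t
    with hd1def
  set d2 : ℝ := 1 / (2 * Real.sqrt 2) * (((i+1 : ℕ) : ℝ) - ((k : ℝ) + 1) / 2) * t⁻¹
      + deriv (h (i+1)) t with hd2def
  have hg1d : HasDerivAt (fun s => gamP k a h i s) d1 t := hasDerivAt_gamP k a h i t ht0 hdiff1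
  have hg2d : HasDerivAt (fun s => gamP k a h (i+1) s) d2 t :=
    hasDerivAt_gamP k a h (i+1) t ht0 hdiff2
  -- bounds on the derivatives of gamma
  have hcoef : ∀ j : ℕ, j ≤ k → |1 / (2 * Real.sqrt 2) * ((j : ℝ) - ((k : ℝ) + 1) / 2)| ≤ (k:ℝ) := by
    intro j hj
    have hj' : (j:ℝ) ≤ (k:ℝ) := by exact_mod_cast hj
    have hj0 : (0:ℝ) ≤ (j:ℝ) := by positivity
    have e1 : |1 / (2 * Real.sqrt 2)| ≤ 1 := by
      rw [abs_of_nonneg (by positivity)]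
      rw [div_le_one (by positivity)]
      nlinarith [one_le_s2]
    have e2 : |(j : ℝ) - ((k : ℝ) + 1) / 2| ≤ (k:ℝ) := by
      rw [abs_le]; constructor <;> [linarith; linarith]
    calc |1 / (2 * Real.sqrt 2) * ((j : ℝ) - ((k : ℝ) + 1) / 2)|
        = |1 / (2 * Real.sqrt 2)| * |(j : ℝ) - ((k : ℝ) + 1) / 2| := abs_mul _ _
      _ ≤ 1 * (k:ℝ) := by
          apply mul_le_mul e1 e2 (abs_nonneg _) (by norm_num)
      _ = (k:ℝ) := one_mul _
  have hderb : ∀ (j : ℕ), j ≤ k → |deriv (h j) t| ≤ t⁻¹ →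
      |1 / (2 * Real.sqrt 2) * ((j : ℝ) - ((k : ℝ) + 1) / 2) * t⁻¹ + deriv (h j) t|
        ≤ ((k:ℝ)+1) * t⁻¹ := by
    intro j hj hdj
    have h1 : |1 / (2 * Real.sqrt 2) * ((j : ℝ) - ((k : ℝ) + 1) / 2) * t⁻¹| ≤ (k:ℝ) * t⁻¹ := by
      rw [abs_mul, abs_of_nonneg (by positivity : (0:ℝ) ≤ t⁻¹)]
      apply mul_le_mul_of_nonneg_right (hcoef j hj) (by positivity)
    calc |1 / (2 * Real.sqrt 2) * ((j : ℝ) - ((k : ℝ) + 1) / 2) * t⁻¹ + deriv (h j) t|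
        ≤ |1 / (2 * Real.sqrt 2) * ((j : ℝ) - ((k : ℝ) + 1) / 2) * t⁻¹| + |deriv (h j) t| :=
          abs_add_le _ _
      _ ≤ (k:ℝ) * t⁻¹ + t⁻¹ := add_le_add h1 hdj
      _ = ((k:ℝ)+1) * t⁻¹ := by ring
  have hinvt : ∀ j : ℕ, t * |deriv (h j) t| ≤ 1 → |deriv (h j) t| ≤ t⁻¹ := by
    intro j hj
    rw [← one_div, le_div_iff₀ ht0]; linarith [hj, abs_nonneg (deriv (h j) t)]
  have hd1b : |d1| ≤ ((k:ℝ)+1) * t⁻¹ := hderb i hik0 (hinvt i hder_hi)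
  have hd2b : |d2| ≤ ((k:ℝ)+1) * t⁻¹ := hderb (i+1) hik1 (hinvt (i+1) hder_hi1)
  -- value and derivatives of xi
  set G := Gfun g1 g2 x with hGdef
  have hval : xiP k a h i t x = 6/(E-1) * G := by
    rw [hGdef, hEdef, hg1def, hg2def, xiP]
    exact xiCorr_eq _ _ x
  have hderx : deriv (fun y => xiP k a h i t y) x
      = 6/(E-1) * (fA' (x - g2) - fA' (x - g1) + -(fA' (g1 - x)) - -(fA' (g2 - x))) := by
    have hfun : (fun y => xiP k a h i t y)
        = fun y => 6 / (E - 1) * Gfun g1 g2 y := by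
      funext y
      rw [hEdef, hg1def, hg2def, xiP]
      exact xiCorr_eq _ _ y
    rw [hfun]
    have := (hasDerivAt_Gfun_x g1 g2 x).const_mul (6/(E-1))
    simpa [mul_comm] using this.deriv
  set GT : ℝ := fA' (x - g2) * (-d2) - fA' (x - g1) * (-d1) + fA' (g1 - x) * d1
      - fA' (g2 - x) * d2 with hGTdef
  set AD : ℝ := -(6 * (Real.sqrt 2 * (d2 - d1)) * E) / (E - 1)^2 with hADdef
  have hdert : deriv (fun s => xiP k a h i s x) t = AD * G + 6/(E-1) * GT := by
    have H := hasDerivAt_xi_t (fun s => gamP k a h i s) (fun s => gamP k a h (i+1) s)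
      d1 d2 x t hg1d hg2d hne
    exact H.deriv
  set P : ℝ := |fA' (x - g1)| + |fA' (x - g2)| + |fA' (g1 - x)| + |fA' (g2 - x)| with hPdef
  have hP0 : 0 ≤ P := by rw [hPdef]; positivity
  have hG0 : 0 ≤ |G| := abs_nonneg G
  have hEinv0 : (0:ℝ) < E⁻¹ := by positivity
  have ht0' : (0:ℝ) < t⁻¹ := by positivity
  have hA12 : |6/(E-1)| ≤ 12 * E⁻¹ := by
    rw [abs_of_pos (by positivity : (0:ℝ) < 6/(E-1))]
    have h12 := div_bound_A E hE2
    rw [div_eq_mul_inv (12:ℝ) E] at h12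
    exact h12
  have habsd : |d2 - d1| ≤ 2*((k:ℝ)+1)*t⁻¹ := by
    calc |d2 - d1| = |d2 + -d1| := by ring_nf
      _ ≤ |d2| + |-d1| := abs_add_le _ _
      _ = |d2| + |d1| := by rw [abs_neg]
      _ ≤ 2*((k:ℝ)+1)*t⁻¹ := by linarith only [hd1b, hd2b]
  have hADb : |AD| ≤ 96*((k:ℝ)+1) * E⁻¹ * t⁻¹ := by
    have e1 : |AD| = 6 * Real.sqrt 2 * |d2 - d1| * E / (E-1)^2 := by
      rw [hADdef, abs_div, abs_neg, abs_mul, abs_mul, abs_mul, abs_of_pos hEpos,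
        abs_of_pos s2_pos, abs_of_nonneg (sq_nonneg (E-1))]
      norm_num
      ring
    have q1 : 6 * Real.sqrt 2 * |d2 - d1| ≤ 24*((k:ℝ)+1)*t⁻¹ := by
      have q2 : Real.sqrt 2 * |d2 - d1| ≤ 2 * |d2 - d1| :=
        mul_le_mul_of_nonneg_right s2_le_two (abs_nonneg _)
      linarith only [q2, habsd]
    have e2 : 6 * Real.sqrt 2 * |d2 - d1| * E / (E-1)^2
        ≤ (24*((k:ℝ)+1)*t⁻¹) * (E / (E-1)^2) := by
      calc 6 * Real.sqrt 2 * |d2 - d1| * E / (E-1)^2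
          = (6 * Real.sqrt 2 * |d2 - d1|) * (E / (E-1)^2) := by ring
        _ ≤ (24*((k:ℝ)+1)*t⁻¹) * (E / (E-1)^2) :=
            mul_le_mul_of_nonneg_right q1 (by positivity)
    have e3 : E / (E-1)^2 ≤ 4 * E⁻¹ := by
      have h4b := div_bound_B E hE2
      rw [div_eq_mul_inv (4:ℝ) E] at h4b
      exact h4b
    calc |AD| = 6 * Real.sqrt 2 * |d2 - d1| * E / (E-1)^2 := e1
      _ ≤ (24*((k:ℝ)+1)*t⁻¹) * (E / (E-1)^2) := e2
      _ ≤ (24*((k:ℝ)+1)*t⁻¹) * (4 * E⁻¹) := by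
          apply mul_le_mul_of_nonneg_left e3 (by positivity)
      _ = 96*((k:ℝ)+1) * E⁻¹ * t⁻¹ := by ring
  have hGTb : |GT| ≤ ((k:ℝ)+1) * t⁻¹ * P := by
    have b1 : |fA' (x - g2) * (-d2)| ≤ |fA' (x - g2)| * (((k:ℝ)+1) * t⁻¹) := by
      rw [abs_mul, abs_neg]; exact mul_le_mul_of_nonneg_left hd2b (abs_nonneg _)
    have b2 : |fA' (x - g1) * (-d1)| ≤ |fA' (x - g1)| * (((k:ℝ)+1) * t⁻¹) := by
      rw [abs_mul, abs_neg]; exact mul_le_mul_of_nonneg_left hd1b (abs_nonneg _)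
    have b3 : |fA' (g1 - x) * d1| ≤ |fA' (g1 - x)| * (((k:ℝ)+1) * t⁻¹) := by
      rw [abs_mul]; exact mul_le_mul_of_nonneg_left hd1b (abs_nonneg _)
    have b4 : |fA' (g2 - x) * d2| ≤ |fA' (g2 - x)| * (((k:ℝ)+1) * t⁻¹) := by
      rw [abs_mul]; exact mul_le_mul_of_nonneg_left hd2b (abs_nonneg _)
    calc |GT| ≤ |fA' (x - g2) * (-d2)| + |fA' (x - g1) * (-d1)| + |fA' (g1 - x) * d1|
          + |fA' (g2 - x) * d2| := by rw [hGTdef]; exact abs4 _ _ _ _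
      _ ≤ (|fA' (x - g2)| + |fA' (x - g1)| + |fA' (g1 - x)| + |fA' (g2 - x)|)
            * (((k:ℝ)+1) * t⁻¹) := by
          have expand : (|fA' (x - g2)| + |fA' (x - g1)| + |fA' (g1 - x)| + |fA' (g2 - x)|)
              * (((k:ℝ)+1) * t⁻¹)
              = |fA' (x - g2)| * (((k:ℝ)+1) * t⁻¹) + |fA' (x - g1)| * (((k:ℝ)+1) * t⁻¹)
                + |fA' (g1 - x)| * (((k:ℝ)+1) * t⁻¹)
                + |fA' (g2 - x)| * (((k:ℝ)+1) * t⁻¹) := by ring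
          rw [expand]
          linarith only [b1, b2, b3, b4]
      _ = ((k:ℝ)+1) * t⁻¹ * P := by rw [hPdef]; ring
  have htt : t * t⁻¹ = 1 := mul_inv_cancel₀ (ne_of_gt ht0)
  have hXP : |fA' (x - g2) - fA' (x - g1) + -(fA' (g1 - x)) - -(fA' (g2 - x))| ≤ P := by
    calc |fA' (x - g2) - fA' (x - g1) + -(fA' (g1 - x)) - -(fA' (g2 - x))|
        ≤ |fA' (x - g2)| + |fA' (x - g1)| + |-(fA' (g1 - x))| + |-(fA' (g2 - x))| := abs4 _ _ _ _
      _ = P := by rw [abs_neg, abs_neg, hPdef]; ring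
  have htot : |xiP k a h i t x| + |deriv (fun y => xiP k a h i t y) x|
      + t * |deriv (fun s => xiP k a h i s x) t|
      ≤ 108*((k:ℝ)+1) * E⁻¹ * (P + |G|) := by
    rw [hval, hderx, hdert]
    have e1 : |6/(E-1) * G| ≤ 12*E⁻¹ * |G| := by
      rw [abs_mul]; exact mul_le_mul_of_nonneg_right hA12 (abs_nonneg _)
    have e2 : |6/(E-1) * (fA' (x - g2) - fA' (x - g1) + -(fA' (g1 - x)) - -(fA' (g2 - x)))|
        ≤ 12*E⁻¹ * P := by
      rw [abs_mul]
      exact mul_le_mul hA12 hXP (abs_nonneg _) (by positivity)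
    have e3 : |AD * G + 6/(E-1) * GT|
        ≤ 96*((k:ℝ)+1) * E⁻¹ * t⁻¹ * |G| + 12*E⁻¹ * (((k:ℝ)+1) * t⁻¹ * P) := by
      calc |AD * G + 6/(E-1) * GT| ≤ |AD * G| + |6/(E-1) * GT| := abs_add_le _ _
        _ = |AD| * |G| + |6 / (E-1)| * |GT| := by rw [abs_mul, abs_mul]
        _ ≤ _ := add_le_add
            (mul_le_mul_of_nonneg_right hADb (abs_nonneg _))
            (mul_le_mul hA12 hGTb (abs_nonneg _) (by positivity))
    have e4 : t * |AD * G + 6/(E-1) * GT|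
        ≤ 96*((k:ℝ)+1) * E⁻¹ * |G| + 12*((k:ℝ)+1)*E⁻¹ * P := by
      calc t * |AD * G + 6/(E-1) * GT|
          ≤ t * (96*((k:ℝ)+1) * E⁻¹ * t⁻¹ * |G| + 12*E⁻¹ * (((k:ℝ)+1) * t⁻¹ * P)) :=
            mul_le_mul_of_nonneg_left e3 ht0.le
        _ = (t*t⁻¹) * (96*((k:ℝ)+1) * E⁻¹ * |G|) + (t*t⁻¹) * (12*((k:ℝ)+1)*E⁻¹ * P) := by ring
        _ = 96*((k:ℝ)+1) * E⁻¹ * |G| + 12*((k:ℝ)+1)*E⁻¹ * P := by rw [htt]; ring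
    have key : 12*E⁻¹*|G| + 12*E⁻¹*P + (96*((k:ℝ)+1) * E⁻¹ * |G| + 12*((k:ℝ)+1)*E⁻¹ * P)
        ≤ 108*((k:ℝ)+1) * E⁻¹ * (P + |G|) :=
      key_comb (k:ℝ) E⁻¹ P |G| hk2 hEinv0.le hP0 hG0
    linarith only [e1, e2, e4, key]
  -- inverse bound on E
  have hKpos : (0:ℝ) < K := by linarith
  have hElow : 33 * Real.sqrt t / K ≤ E := by
    have step : 33 * Real.sqrt t / K ≤ Real.sqrt (1152*t) / K := by gcongr
    linarith
  have hEinv : E⁻¹ ≤ K / 33 * (Real.sqrt t)⁻¹ := by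
    have hpos : (0:ℝ) < 33 * Real.sqrt t / K := by positivity
    have h1 : E⁻¹ ≤ (33 * Real.sqrt t / K)⁻¹ := by
      apply inv_anti₀ hpos hElow
    have h2 : (33 * Real.sqrt t / K)⁻¹ = K / 33 * (Real.sqrt t)⁻¹ := by
      field_simp
    rw [h2] at h1
    exact h1
  have hrw : t ^ (-(1:ℝ)/2) = (Real.sqrt t)⁻¹ := rpow_neg_half t ht0
  have hsti : (0:ℝ) < (Real.sqrt t)⁻¹ := by positivity
  have hmaster : ∀ S : ℝ, P + |G| ≤ S →
      |xiP k a h i t x| + |deriv (fun y => xiP k a h i t y) x|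
        + t * |deriv (fun s => xiP k a h i s x) t|
      ≤ 108*((k:ℝ)+1) * (K / 33 * (Real.sqrt t)⁻¹) * S := by
    intro S hS
    calc |xiP k a h i t x| + |deriv (fun y => xiP k a h i t y) x|
          + t * |deriv (fun s => xiP k a h i s x) t|
        ≤ 108*((k:ℝ)+1) * E⁻¹ * (P + |G|) := htot
      _ ≤ 108*((k:ℝ)+1) * (K / 33 * (Real.sqrt t)⁻¹) * (P + |G|) := by
          apply mul_le_mul_of_nonneg_right
            (mul_le_mul_of_nonneg_left hEinv (by positivity)) (by linarith)
      _ ≤ 108*((k:ℝ)+1) * (K / 33 * (Real.sqrt t)⁻¹) * S :=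
          mul_le_mul_of_nonneg_left hS (by positivity)
  refine ⟨?_, ?_, ?_⟩
  · -- left region
    intro hx
    have hb : 0 ≤ g1 - x := by linarith
    have hbc : g1 - x ≤ g2 - x := by linarith
    have hR := region_bound σ hσ0 hσ2 (g1 - x) (g2 - x) hb hbc
    have hQb : |G| ≤ |fA (-(g2 - x)) - fA (-(g1 - x))| + fA (g1 - x) + fA (g2 - x) := by
      have e : G = (fA (-(g2-x)) - fA (-(g1-x))) + (fA (g1-x) - fA (g2-x)) := by
        rw [hGdef, Gfun, show x - g2 = -(g2 - x) by ring, show x - g1 = -(g1-x) by ring]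
        ring
      rw [e]
      have h1 : |fA (g1-x) - fA (g2-x)| ≤ fA (g1-x) + fA (g2-x) := by
        rw [abs_le]
        constructor
        · linarith only [fA_nonneg (g1-x), fA_nonneg (g2-x)]
        · linarith only [fA_nonneg (g2-x), fA_nonneg (g1-x)]
      calc |(fA (-(g2-x)) - fA (-(g1-x))) + (fA (g1-x) - fA (g2-x))|
          ≤ |fA (-(g2-x)) - fA (-(g1-x))| + |fA (g1-x) - fA (g2-x)| := abs_add_le _ _
        _ ≤ _ := by linarith only [h1]
    have hPeq : P = |fA' (-(g1-x))| + |fA' (-(g2-x))| + |fA' (g1-x)| + |fA' (g2-x)| := by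
      rw [hPdef, show x - g1 = -(g1 - x) by ring, show x - g2 = -(g2-x) by ring]
    have hPQ : P + |G| ≤ (6 + 6*Csig σ) * Real.exp (-σ * (g1 - x)) := by
      rw [hPeq]
      linarith only [hR, hQb, hPeq]
    have habsx : |x - g1| = g1 - x := by rw [abs_of_nonpos (by linarith : x - g1 ≤ 0)]; ring
    have hcoef : 108*((k:ℝ)+1) * (K/33) * (6 + 6*Csig σ) ≤ C := by
      rw [hCdef]
      have hfac : (0:ℝ) ≤ 108*((k:ℝ)+1)*K := by positivity
      have hlin : (6 + 6*Csig σ)/33 ≤ 22 + 6*Csig σ := by linarith only [hCs]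
      have hprod := mul_le_mul_of_nonneg_left hlin hfac
      linarith only [hprod]
    calc |xiP k a h i t x| + |deriv (fun y => xiP k a h i t y) x|
          + t * |deriv (fun s => xiP k a h i s x) t|
        ≤ 108*((k:ℝ)+1) * (K / 33 * (Real.sqrt t)⁻¹)
            * ((6 + 6*Csig σ) * Real.exp (-σ * (g1 - x))) := hmaster _ hPQ
      _ = (108*((k:ℝ)+1) * (K/33) * (6 + 6*Csig σ)) * (Real.sqrt t)⁻¹
            * Real.exp (-σ * (g1 - x)) := by ring
      _ ≤ C * (Real.sqrt t)⁻¹ * Real.exp (-σ * (g1 - x)) := by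
          apply mul_le_mul_of_nonneg_right
            (mul_le_mul_of_nonneg_right hcoef hsti.le) (Real.exp_pos _).le
      _ = C * t ^ (-(1:ℝ)/2) * Real.exp (-σ * |x - g1|) := by rw [hrw, habsx]
  · -- right region
    intro hx
    have hb : 0 ≤ x - g2 := by linarith
    have hbc : x - g2 ≤ x - g1 := by linarith
    have hR := region_bound σ hσ0 hσ2 (x - g2) (x - g1) hb hbc
    have hQb : |G| ≤ |fA (-(x - g1)) - fA (-(x - g2))| + fA (x - g2) + fA (x - g1) := by
      have e : G = (fA (-(x-g1)) - fA (-(x-g2))) + (fA (x-g2) - fA (x-g1)) := by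
        rw [hGdef, Gfun, show g1 - x = -(x - g1) by ring, show g2 - x = -(x-g2) by ring]
        ring
      rw [e]
      have h1 : |fA (x-g2) - fA (x-g1)| ≤ fA (x-g2) + fA (x-g1) := by
        rw [abs_le]
        constructor
        · linarith only [fA_nonneg (x-g2), fA_nonneg (x-g1)]
        · linarith only [fA_nonneg (x-g1), fA_nonneg (x-g2)]
      calc |(fA (-(x-g1)) - fA (-(x-g2))) + (fA (x-g2) - fA (x-g1))|
          ≤ |fA (-(x-g1)) - fA (-(x-g2))| + |fA (x-g2) - fA (x-g1)| := abs_add_le _ _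
        _ ≤ _ := by linarith only [h1]
    have hPeq : P = |fA' (-(x-g1))| + |fA' (-(x-g2))| + |fA' (x-g1)| + |fA' (x-g2)| := by
      rw [hPdef, show g1 - x = -(x - g1) by ring, show g2 - x = -(x-g2) by ring]
      ring
    have hPQ : P + |G| ≤ (6 + 6*Csig σ) * Real.exp (-σ * (x - g2)) := by
      rw [hPeq]
      linarith only [hR, hQb]
    have habsx : |x - g2| = x - g2 := abs_of_nonneg hb
    have hcoef : 108*((k:ℝ)+1) * (K/33) * (6 + 6*Csig σ) ≤ C := by
      rw [hCdef]
      have hfac : (0:ℝ) ≤ 108*((k:ℝ)+1)*K := by positivity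
      have hlin : (6 + 6*Csig σ)/33 ≤ 22 + 6*Csig σ := by linarith only [hCs]
      have hprod := mul_le_mul_of_nonneg_left hlin hfac
      linarith only [hprod]
    calc |xiP k a h i t x| + |deriv (fun y => xiP k a h i t y) x|
          + t * |deriv (fun s => xiP k a h i s x) t|
        ≤ 108*((k:ℝ)+1) * (K / 33 * (Real.sqrt t)⁻¹)
            * ((6 + 6*Csig σ) * Real.exp (-σ * (x - g2))) := hmaster _ hPQ
      _ = (108*((k:ℝ)+1) * (K/33) * (6 + 6*Csig σ)) * (Real.sqrt t)⁻¹
            * Real.exp (-σ * (x - g2)) := by ring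
      _ ≤ C * (Real.sqrt t)⁻¹ * Real.exp (-σ * (x - g2)) := by
          apply mul_le_mul_of_nonneg_right
            (mul_le_mul_of_nonneg_right hcoef hsti.le) (Real.exp_pos _).le
      _ = C * t ^ (-(1:ℝ)/2) * Real.exp (-σ * |x - g2|) := by rw [hrw, habsx]
  · -- middle region
    intro hx1 hx2
    have hq : |G| ≤ 4 := by
      rw [hGdef, Gfun]
      have := abs4 (fA (x - g2)) (fA (x - g1)) (fA (g1 - x)) (fA (g2 - x))
      rw [abs_of_nonneg (fA_nonneg (x-g2)), abs_of_nonneg (fA_nonneg (x-g1)),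
        abs_of_nonneg (fA_nonneg (g1-x)), abs_of_nonneg (fA_nonneg (g2-x))] at this
      have e : fA (x - g2) - fA (x - g1) + fA (g1 - x) - fA (g2 - x)
          = fA (x - g2) - fA (x - g1) + (fA (g1 - x)) - fA (g2 - x) := by ring
      linarith only [this, fA_le_one (x-g2), fA_le_one (x-g1), fA_le_one (g1-x),
        fA_le_one (g2-x)]
    have hp : P ≤ 8 := by
      rw [hPdef]
      linarith only [fA'_abs (x-g1), fA'_abs (x-g2), fA'_abs (g1-x), fA'_abs (g2-x), s2_le_two]
    have hPQ : P + |G| ≤ 12 := by linarith only [hq, hp]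
    have hcoef : 108*((k:ℝ)+1) * (K/33) * 12 ≤ C := by
      rw [hCdef]
      have hfac : (0:ℝ) ≤ 108*((k:ℝ)+1)*K := by positivity
      have hlin : (12:ℝ)/33 ≤ 22 + 6*Csig σ := by linarith only [hCs]
      have hprod := mul_le_mul_of_nonneg_left hlin hfac
      linarith only [hprod]
    calc |xiP k a h i t x| + |deriv (fun y => xiP k a h i t y) x|
          + t * |deriv (fun s => xiP k a h i s x) t|
        ≤ 108*((k:ℝ)+1) * (K / 33 * (Real.sqrt t)⁻¹) * 12 := hmaster _ hPQ
      _ = (108*((k:ℝ)+1) * (K/33) * 12) * (Real.sqrt t)⁻¹ := by ring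
      _ ≤ C * (Real.sqrt t)⁻¹ := mul_le_mul_of_nonneg_right hcoef hsti.le
      _ = C * t ^ (-(1:ℝ)/2) := by rw [hrw]
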